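/- Let X be a complex Banach space and Γ a set of bounded linear operators on X such that TS ∈ Γ whenever T, S ∈ Γ. Let (λ_T)_{T∈Γ} be a family of unimodular complex numbers (|λ_T| = 1) which is multiplicative, i.e., λ_{TS} = λ_T λ_S for all T, S ∈ Γ. Then Γ is recurrent if and only if Γ₁ := { λ_T T : T ∈ Γ } is recurrent. -/

import Mathlib

open Filter Topology

lemma key_recurrent {X : Type*} [NormedAddCommGroup X] [NormedSpace ℂ X]
    (Δ Δ' : Set (X →L[ℂ] X))
    (hmulΔ : ∀ T ∈ Δ, ∀ S ∈ Δ, T * S ∈ Δ)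
    (hrel : ∀ T ∈ Δ, ∃ c : ℂ, ‖c‖ = 1 ∧ c • T ∈ Δ')
    (hprod : ∀ (c d : ℂ) (T S : X →L[ℂ] X), T ∈ Δ → S ∈ Δ →
      c • T ∈ Δ' → d • S ∈ Δ' → (c * d) • (T * S) ∈ Δ')
    (hrec : ∀ U : Set X, IsOpen U → U.Nonempty → ∃ T ∈ Δ, (T '' U ∩ U).Nonempty) :
    ∀ U : Set X, IsOpen U → U.Nonempty → ∃ T ∈ Δ', (T '' U ∩ U).Nonempty := by
  classical
  intro U hU hUne
  obtain ⟨x, hxU⟩ := hUne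
  obtain ⟨ε0, hε0, hball0⟩ := Metric.isOpen_iff.1 hU x hxU
  set ε := ε0 / 2 with hεdef
  have hε : 0 < ε := by positivity
  have hball : Metric.ball x (2 * ε) ⊆ U := by
    have : 2 * ε = ε0 := by ring
    rwa [this]
  -- the one-step construction
  have step : ∀ p : {p : Set X × (X →L[ℂ] X) × ℂ // IsOpen p.1 ∧ p.1.Nonempty},
      ∃ q : {q : Set X × (X →L[ℂ] X) × ℂ // IsOpen q.1 ∧ q.1.Nonempty},
        q.1.1 ⊆ p.1.1 ∧ q.1.2.1 '' q.1.1 ⊆ p.1.1 ∧ q.1.2.1 ∈ Δ ∧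
        ‖q.1.2.2‖ = 1 ∧ q.1.2.2 • q.1.2.1 ∈ Δ' := by
    rintro ⟨⟨V, _, _⟩, hV, hVne⟩
    obtain ⟨T, hT, z, hz1, hz2⟩ := hrec V hV hVne
    obtain ⟨y, hyV, hTy⟩ := hz1
    obtain ⟨c, hc, hcT⟩ := hrel T hT
    refine ⟨⟨(V ∩ T ⁻¹' V, T, c), hV.inter (hV.preimage T.continuous),
      ⟨y, hyV, by simpa [Set.mem_preimage, hTy] using hz2⟩⟩,
      Set.inter_subset_left, ?_, hT, hc, hcT⟩
    rintro w ⟨a, ⟨_, ha2⟩, rfl⟩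
    exact ha2
  choose g hg1 hg2 hg3 hg4 hg5 using step
  -- the recursive sequence
  let f : ℕ → {p : Set X × (X →L[ℂ] X) × ℂ // IsOpen p.1 ∧ p.1.Nonempty} :=
    fun n => Nat.rec ⟨(Metric.ball x ε, 1, 1),
      Metric.isOpen_ball, ⟨x, Metric.mem_ball_self hε⟩⟩ (fun _ p => g p) n
  have hf : ∀ n, f (n + 1) = g (f n) := fun n => rfl
  set V : ℕ → Set X := fun n => (f n).1.1 with hVdef
  set T : ℕ → (X →L[ℂ] X) := fun n => (f n).1.2.1 with hTdef
  set c : ℕ → ℂ := fun n => (f n).1.2.2 with hcdef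
  have hV0 : V 0 = Metric.ball x ε := rfl
  have hVsub : ∀ n, V (n + 1) ⊆ V n := fun n => hg1 (f n)
  have hTim : ∀ n, T (n + 1) '' V (n + 1) ⊆ V n := fun n => hg2 (f n)
  have hTΔ : ∀ n, T (n + 1) ∈ Δ := fun n => hg3 (f n)
  have hcabs : ∀ n, ‖c (n + 1)‖ = 1 := fun n => hg4 (f n)
  have hcΔ' : ∀ n, c (n + 1) • T (n + 1) ∈ Δ' := fun n => hg5 (f n)
  have hVne : ∀ n, (V n).Nonempty := fun n => (f n).2.2
  have hV0sub : ∀ n, V n ⊆ V 0 := by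
    intro n
    induction n with
    | zero => exact subset_rfl
    | succ k ih => exact (hVsub k).trans ih
  -- products
  have claim : ∀ k i : ℕ, ∃ P : X →L[ℂ] X, P ∈ Δ ∧ P '' V (i + k + 1) ⊆ V i ∧
      (∏ m ∈ Finset.range (k + 1), c (i + m + 1)) • P ∈ Δ' := by
    intro k
    induction k with
    | zero =>
      intro i
      refine ⟨T (i + 1), hTΔ i, hTim i, ?_⟩
      simpa using hcΔ' i
    | succ k ih =>
      intro i
      obtain ⟨P, hPΔ, hPim, hPw⟩ := ih (i + 1)
      refine ⟨T (i + 1) * P, hmulΔ _ (hTΔ i) _ hPΔ, ?_, ?_⟩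
      · have h1 : (i + (k + 1) + 1) = (i + 1) + k + 1 := by omega
        rw [ContinuousLinearMap.mul_def, ContinuousLinearMap.coe_comp', Set.image_comp, h1]
        exact (Set.image_mono hPim).trans (hTim i)
      · have h2 : (∏ m ∈ Finset.range (k + 1 + 1), c (i + m + 1)) =
            c (i + 1) * ∏ m ∈ Finset.range (k + 1), c ((i + 1) + m + 1) := by
          have h3 : (∏ m ∈ Finset.range (k + 1), c (i + (m + 1) + 1)) =
              ∏ m ∈ Finset.range (k + 1), c ((i + 1) + m + 1) :=
            Finset.prod_congr rfl fun m _ => by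
              rw [show i + (m + 1) + 1 = (i + 1) + m + 1 by omega]
          rw [Finset.prod_range_succ', h3, Nat.add_zero, mul_comm]
        rw [h2]
        exact hprod _ _ _ _ (hTΔ i) hPΔ (hcΔ' i) hPw
  -- the unimodular products
  set μ : ℕ → ℂ := fun n => ∏ m ∈ Finset.range n, c (m + 1) with hμdef
  have hμabs : ∀ n, ‖μ n‖ = 1 := by
    intro n
    rw [hμdef]
    simp only
    rw [norm_prod]
    exact Finset.prod_eq_one fun m _ => hcabs m
  have hμrel : ∀ i k : ℕ, μ (i + k + 1) = μ i * ∏ m ∈ Finset.range (k + 1), c (i + m + 1) := by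
    intro i k
    have : i + k + 1 = i + (k + 1) := by omega
    rw [this, hμdef]
    simp only
    rw [Finset.prod_range_add]
  -- pigeonhole via Bolzano-Weierstrass
  set δ : ℝ := ε / (‖x‖ + ε + 1) with hδdef
  have hδ : 0 < δ := by positivity
  have hbdd : Bornology.IsBounded (Metric.closedBall (0:ℂ) 1) := Metric.isBounded_closedBall
  have hμmem : ∀ n, μ n ∈ Metric.closedBall (0:ℂ) 1 := by
    intro n
    rw [Metric.mem_closedBall, dist_zero_right]
    exact le_of_eq (hμabs n)
  obtain ⟨b, -, φ, hφ, hconv⟩ := tendsto_subseq_of_bounded hbdd hμmem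
  have hcauchy : ∃ i j : ℕ, i < j ∧ ‖μ j - μ i‖ < δ := by
    rw [Metric.tendsto_atTop] at hconv
    obtain ⟨N, hN⟩ := hconv (δ / 2) (by positivity)
    refine ⟨φ N, φ (N + 1), hφ (Nat.lt_succ_self N), ?_⟩
    have h1 := hN N le_rfl
    have h2 := hN (N + 1) (Nat.le_succ N)
    simp only [Function.comp_apply] at h1 h2
    rw [show ‖μ (φ (N + 1)) - μ (φ N)‖ = dist (μ (φ (N + 1))) (μ (φ N))
      from (Complex.dist_eq _ _).symm]
    calc dist (μ (φ (N + 1))) (μ (φ N)) ≤ dist (μ (φ (N + 1))) b + dist b (μ (φ N)) :=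
          dist_triangle _ _ _
      _ < δ / 2 + δ / 2 := add_lt_add h2 (by rwa [dist_comm] at h1)
      _ = δ := by ring
  obtain ⟨i, j, hij, hclose⟩ := hcauchy
  -- apply the claim with k = j - i - 1
  obtain ⟨P, hPΔ, hPim, hPw⟩ := claim (j - i - 1) i
  have hjeq : i + (j - i - 1) + 1 = j := by omega
  rw [hjeq] at hPim
  set w : ℂ := ∏ m ∈ Finset.range (j - i - 1 + 1), c (i + m + 1) with hwdef
  have hμw : μ j = μ i * w := by
    rw [← hjeq]
    exact hμrel i (j - i - 1)
  have hw1 : ‖w - 1‖ < δ := by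
    have : μ j - μ i = μ i * (w - 1) := by rw [hμw]; ring
    rw [this, norm_mul, hμabs i, one_mul] at hclose
    exact hclose
  -- finish
  refine ⟨w • P, hPw, ?_⟩
  obtain ⟨z, hz⟩ := hVne j
  have hzU : z ∈ U := hball (Metric.ball_subset_ball (by linarith) (hV0sub j hz))
  have hPz : P z ∈ Metric.ball x ε := by
    have := hV0sub i (hPim ⟨z, hz, rfl⟩)
    rwa [hV0] at this
  rw [Metric.mem_ball, dist_eq_norm] at hPz
  have hPznorm : ‖P z‖ < ‖x‖ + ε := by
    calc ‖P z‖ ≤ ‖P z - x‖ + ‖x‖ := by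
          simpa using norm_add_le (P z - x) x
      _ < ε + ‖x‖ := by linarith
      _ = ‖x‖ + ε := by ring
  have hwPz : w • P z ∈ Metric.ball x (2 * ε) := by
    rw [Metric.mem_ball, dist_eq_norm]
    have heq : w • P z - x = (w - 1) • P z + (P z - x) := by
      rw [sub_smul, one_smul]; abel
    rw [heq]
    have h1 : ‖(w - 1) • P z‖ < ε := by
      rw [norm_smul]
      have hnw : ‖w - 1‖ = ‖w - 1‖ := rfl
      have hxε : 0 < ‖x‖ + ε + 1 := by positivity
      have key : ‖w - 1‖ * ‖P z‖ < δ * (‖x‖ + ε) := by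
        rcases eq_or_lt_of_le (norm_nonneg (P z)) with h0 | h0
        · rw [← h0, mul_zero]; positivity
        · calc ‖w - 1‖ * ‖P z‖ ≤ δ * ‖P z‖ :=
                mul_le_mul_of_nonneg_right hw1.le (norm_nonneg _)
            _ < δ * (‖x‖ + ε) := by
                exact mul_lt_mul_of_pos_left hPznorm hδ
      have : δ * (‖x‖ + ε) < ε := by
        rw [hδdef, div_mul_eq_mul_div, div_lt_iff₀ hxε]
        nlinarith [norm_nonneg x]
      rw [hnw]
      linarith
    calc ‖(w - 1) • P z + (P z - x)‖ ≤ ‖(w - 1) • P z‖ + ‖P z - x‖ := norm_add_le _ _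
      _ < ε + ε := add_lt_add h1 hPz
      _ = 2 * ε := by ring
  exact ⟨w • P z, ⟨z, hzU, by simp⟩, hball hwPz⟩

/-- A set `Γ` of bounded linear operators is *recurrent* if for each nonempty open set `U`
there exists `T ∈ Γ` with `T(U) ∩ U ≠ ∅`. -/
def IsRecurrentSet {X : Type*} [NormedAddCommGroup X] [NormedSpace ℂ X]
    (Γ : Set (X →L[ℂ] X)) : Prop :=
  ∀ U : Set X, IsOpen U → U.Nonempty → ∃ T ∈ Γ, (T '' U ∩ U).Nonempty

theorem recurrentSet_iff_unimodular_smul {X : Type*} [NormedAddCommGroup X]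
    [NormedSpace ℂ X] [CompleteSpace X] (Γ : Set (X →L[ℂ] X))
    (hΓ : ∀ T ∈ Γ, ∀ S ∈ Γ, T * S ∈ Γ)
    (lam : (X →L[ℂ] X) → ℂ)
    (hmod : ∀ T ∈ Γ, ‖lam T‖ = 1)
    (hmul : ∀ T ∈ Γ, ∀ S ∈ Γ, lam (T * S) = lam T * lam S) :
    IsRecurrentSet Γ ↔ IsRecurrentSet {A | ∃ T ∈ Γ, A = lam T • T} := by
  set Γ₁ : Set (X →L[ℂ] X) := {A | ∃ T ∈ Γ, A = lam T • T} with hΓ₁def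
  constructor
  · intro hrec
    refine key_recurrent Γ Γ₁ hΓ ?_ ?_ hrec
    · intro T hT
      exact ⟨lam T, hmod T hT, ⟨T, hT, rfl⟩⟩
    · rintro c d T S hT hS ⟨R, hR, hcT⟩ ⟨Q, hQ, hdS⟩
      refine ⟨R * Q, hΓ R hR Q hQ, ?_⟩
      have : (c * d) • (T * S) = (c • T) * (d • S) := (smul_mul_smul_comm c T d S).symm
      rw [this, hcT, hdS, smul_mul_smul_comm, hmul R hR Q hQ]
  · intro hrec
    refine key_recurrent Γ₁ Γ ?_ ?_ ?_ hrec
    · rintro A ⟨T, hT, rfl⟩ B ⟨S, hS, rfl⟩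
      refine ⟨T * S, hΓ T hT S hS, ?_⟩
      rw [smul_mul_smul_comm, hmul T hT S hS]
    · rintro A ⟨T, hT, rfl⟩
      refine ⟨(starRingEnd ℂ) (lam T), ?_, ?_⟩
      · rw [Complex.norm_conj]
        exact hmod T hT
      · rw [smul_smul]
        have : (starRingEnd ℂ) (lam T) * lam T = 1 := by
          rw [Complex.conj_mul']
          have : ‖lam T‖ = 1 := by exact hmod T hT
          rw [this]
          norm_num
        rw [this, one_smul]
        exact hT
    · rintro c d A B - - hcA hdB
      rw [show (c * d) • (A * B) = (c • A) * (d • B) from (smul_mul_smul_comm c A d B).symm]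
      exact hΓ _ hcA _ hdB
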